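/- The baker map B is chaotic on [0,1]: B maps [0,1] onto [0,1], is topologically transitive on [0,1] (with the subspace topology), has a dense set of periodic points in [0,1], and is sensitive to initial conditions on [0,1] (with the standard metric). (B is not continuous at 1/2, but it is continuous at every periodic point of B.) -/

import Mathlib

/-- The baker map `B : ℝ → ℝ`. -/
noncomputable def baker (x : ℝ) : ℝ := if x ≤ 1 / 2 then 2 * x else 2 * x - 1

/-- The baker map maps `[0,1]` into itself. -/
theorem baker_mem {x : ℝ} (hx : x ∈ Set.Icc (0 : ℝ) 1) :
    baker x ∈ Set.Icc (0 : ℝ) 1 := by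
  obtain ⟨h0, h1⟩ := hx
  unfold baker
  split_ifs with h
  · exact ⟨by linarith, by linarith⟩
  · exact ⟨by linarith, by linarith⟩

/-- The baker map restricted to `[0,1]` (with the subspace topology and the
standard metric). -/
noncomputable def bakerSub : Set.Icc (0 : ℝ) 1 → Set.Icc (0 : ℝ) 1 :=
  fun x => ⟨baker x, baker_mem x.2⟩

lemma bakerA : ∀ n : ℕ, ∀ m : ℕ, m < 2^n → ∀ y : ℝ, 0 < y → y < 1 →
    baker^[n] (((m:ℝ) + y)/2^n) = y := by
  intro n
  induction n with
  | zero => intro m hm y hy0 hy1; interval_cases m; simp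
  | succ k ih =>
    intro m hm y hy0 hy1
    rw [Function.iterate_succ_apply]
    have h2k : (0:ℝ) < 2^k := by positivity
    rcases lt_or_ge m (2^k) with h | h
    · have hmle : (m:ℝ) + 1 ≤ 2^k := by exact_mod_cast h
      have hle : ((m:ℝ) + y)/2^(k+1) ≤ 1/2 := by
        rw [div_le_div_iff₀ (by positivity) (by norm_num), pow_succ]
        nlinarith
      have hb : baker (((m:ℝ) + y)/2^(k+1)) = ((m:ℝ)+y)/2^k := by
        rw [baker, if_pos hle, pow_succ]; ring
      rw [hb]; exact ih m h y hy0 hy1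
    · obtain ⟨m', rfl⟩ : ∃ m', m = m' + 2^k := ⟨m - 2^k, by omega⟩
      have hm' : m' < 2^k := by rw [pow_succ] at hm; omega
      have hcast : ((m' + 2^k : ℕ):ℝ) = (m':ℝ) + 2^k := by push_cast; ring
      have hgt : ¬ (((m' + 2^k : ℕ):ℝ) + y)/2^(k+1) ≤ 1/2 := by
        rw [hcast, not_le, lt_div_iff₀ (by positivity), pow_succ]
        nlinarith
      have hb : baker ((((m' + 2^k:ℕ):ℝ) + y)/2^(k+1)) = ((m':ℝ)+y)/2^k := by
        rw [baker, if_neg hgt, hcast, pow_succ]; field_simp; ring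
      rw [hb]; exact ih m' hm' y hy0 hy1

lemma dyadic_in (a b : ℝ) (ha : 0 ≤ a) (hb : b ≤ 1) (hab : a < b) :
    ∃ n m : ℕ, 0 < n ∧ m < 2^n ∧ ∀ y : ℝ, 0 < y → y < 1 →
      a < ((m:ℝ) + y)/2^n ∧ ((m:ℝ) + y)/2^n < b := by
  obtain ⟨n, hn⟩ := exists_pow_lt_of_lt_one (show (0:ℝ) < (b-a)/2 by linarith)
    (by norm_num : (1:ℝ)/2 < 1)
  have h2n : (0:ℝ) < 2^n := by positivity
  have hn' : 2 / 2^n < b - a := by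
    rw [div_pow, one_pow] at hn
    rw [div_lt_iff₀ h2n]
    rw [div_lt_div_iff₀ h2n (by norm_num)] at hn
    linarith
  have hnpos : 0 < n := by
    rcases Nat.eq_zero_or_pos n with rfl | h
    · norm_num at hn'; linarith
    · exact h
  set m := ⌈a * 2^n⌉₊ with hm
  have h1 : a * 2^n ≤ (m:ℝ) := Nat.le_ceil _
  have h2 : (m:ℝ) < a * 2^n + 1 := Nat.ceil_lt_add_one (by positivity)
  have key : a * 2^n + 2 < 2^n := by
    have : a + 2/2^n < b := by linarith
    have := mul_lt_mul_of_pos_right (lt_of_lt_of_le this hb) h2n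
    rw [add_mul, div_mul_cancel₀] at this
    · linarith
    · positivity
  refine ⟨n, m, hnpos, ?_, ?_⟩
  · have : (m:ℝ) < (2:ℝ)^n := by linarith
    exact_mod_cast this
  · intro y hy0 hy1
    constructor
    · rw [lt_div_iff₀ h2n]; nlinarith
    · have h3 : 2 < (b-a)*2^n := (div_lt_iff₀ h2n).1 hn'
      rw [div_lt_iff₀ h2n]; nlinarith

lemma bakerSub_val (n : ℕ) (x : Set.Icc (0:ℝ) 1) :
    (bakerSub^[n] x).val = baker^[n] x.val := by
  induction n generalizing x with
  | zero => rfl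
  | succ k ih =>
    rw [Function.iterate_succ_apply, Function.iterate_succ_apply, ih]
    rfl

lemma baker_one : baker 1 = 1 := by norm_num [baker]

lemma baker_zero : baker 0 = 0 := by norm_num [baker]

/-- Fixed points of iterates. -/
lemma bakerB (n : ℕ) (hn : 0 < n) (m : ℕ) (hm : (m:ℝ) ≤ 2^n - 1) :
    baker^[n] ((m:ℝ)/(2^n - 1)) = (m:ℝ)/(2^n - 1) := by
  have h2n : (1:ℝ) < 2^n := by
    have : (2:ℝ)^0 < 2^n := pow_lt_pow_right₀ (by norm_num) hn
    simpa using this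
  have hden : (0:ℝ) < 2^n - 1 := by linarith
  rcases Nat.eq_zero_or_pos m with rfl | hm0
  · simpa using Function.iterate_fixed baker_zero n
  rcases eq_or_lt_of_le hm with he | hlt
  · rw [he, div_self (by linarith)]
    exact Function.iterate_fixed baker_one n
  · set p := (m:ℝ)/(2^n - 1) with hp
    have hp0 : 0 < p := by
      apply div_pos _ hden
      exact_mod_cast hm0
    have hp1 : p < 1 := by
      rw [hp, div_lt_one hden]; linarith
    have hmn : m < 2^n := by
      have : (m:ℝ) < 2^n := by linarith
      exact_mod_cast this
    have hrep : ((m:ℝ) + p)/2^n = p := by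
      rw [hp]; field_simp; ring
    calc baker^[n] p = baker^[n] (((m:ℝ) + p)/2^n) := by rw [hrep]
    _ = p := bakerA n m hmn p hp0 hp1

/-- Inside any open set of the subspace there is an open real interval. -/
lemma open_sub (U : Set (Set.Icc (0:ℝ) 1)) (hU : IsOpen U) (u : Set.Icc (0:ℝ) 1)
    (hu : u ∈ U) : ∃ a b : ℝ, 0 ≤ a ∧ b ≤ 1 ∧ a < b ∧
      ∀ t : Set.Icc (0:ℝ) 1, a < t.val → t.val < b → t ∈ U := by
  obtain ⟨δ, hδ, hball⟩ := Metric.isOpen_iff.1 hU u hu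
  obtain ⟨hu0, hu1⟩ := u.2
  set e := min δ (1/2) with he
  have he0 : 0 < e := lt_min hδ (by norm_num)
  have heδ : e ≤ δ := min_le_left _ _
  refine ⟨max 0 (u.val - e), min 1 (u.val + e), le_max_left _ _, min_le_left _ _, ?_, ?_⟩
  · simp only [max_lt_iff, lt_min_iff]
    refine ⟨⟨by norm_num, by linarith⟩, by linarith, by linarith⟩
  · intro t hta htb
    apply hball
    rw [Metric.mem_ball, Subtype.dist_eq, Real.dist_eq, abs_lt]
    constructor
    · have : u.val - e ≤ max 0 (u.val - e) := le_max_right _ _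
      have := lt_of_le_of_lt this hta
      linarith
    · have : min 1 (u.val + e) ≤ u.val + e := min_le_right _ _
      have := lt_of_lt_of_le htb this
      linarith
/-- the baker map is chaotic on `[0,1]`: it maps `[0,1]` onto
`[0,1]`, is topologically transitive on `[0,1]` (subspace topology), has a
dense set of periodic points in `[0,1]`, and is sensitive to initial conditions
on `[0,1]` (standard metric). It is not continuous at `1/2`, but it is
continuous at every periodic point. -/
theorem stmt17 :
    Function.Surjective bakerSub ∧
    (∀ U V : Set (Set.Icc (0 : ℝ) 1), IsOpen U → IsOpen V →
      U.Nonempty → V.Nonempty → ∃ n > 0, (bakerSub^[n] '' U ∩ V).Nonempty) ∧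
    Dense {x : Set.Icc (0 : ℝ) 1 | ∃ n > 0, bakerSub^[n] x = x} ∧
    (∃ η > 0, ∀ x : Set.Icc (0 : ℝ) 1, ∀ ε > 0, ∃ z : Set.Icc (0 : ℝ) 1,
      dist x z < ε ∧ ∃ n : ℕ, dist (bakerSub^[n] x) (bakerSub^[n] z) > η) ∧
    ¬ ContinuousAt bakerSub ⟨1 / 2, by norm_num⟩ ∧
    (∀ x : Set.Icc (0 : ℝ) 1, (∃ n > 0, bakerSub^[n] x = x) →
      ContinuousAt bakerSub x) := by
  refine ⟨?surj, ?trans, ?dense, ?sens, ?ncont, ?cont⟩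
  case surj =>
    intro y
    obtain ⟨hy0, hy1⟩ := y.2
    refine ⟨⟨y.val/2, ⟨by linarith, by linarith⟩⟩, ?_⟩
    apply Subtype.ext
    show baker (y.val/2) = y.val
    rw [baker, if_pos (by linarith)]
    ring
  case trans =>
    rintro U V hU hV ⟨u, hu⟩ ⟨v, hv⟩
    obtain ⟨a, b, ha, hb, hab, hsub⟩ := open_sub U hU u hu
    obtain ⟨a', b', ha', hb', hab', hsub'⟩ := open_sub V hV v hv
    obtain ⟨n, m, hn, hmn, hy⟩ := dyadic_in a b ha hb hab
    set y := (a' + b')/2 with hydef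
    have hy0 : 0 < y := by simp only [hydef]; linarith
    have hy1 : y < 1 := by simp only [hydef]; linarith
    obtain ⟨h1, h2⟩ := hy y hy0 hy1
    have hzIcc : ((m:ℝ) + y)/2^n ∈ Set.Icc (0:ℝ) 1 :=
      ⟨by linarith, by linarith⟩
    refine ⟨n, hn, ⟨⟨y, ⟨le_of_lt hy0, le_of_lt hy1⟩⟩,
      ⟨⟨((m:ℝ) + y)/2^n, hzIcc⟩, hsub _ h1 h2, ?_⟩, hsub' _ ?_ ?_⟩⟩
    · apply Subtype.ext
      rw [bakerSub_val]
      exact bakerA n m hmn y hy0 hy1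
    · show a' < y; simp only [hydef]; linarith
    · show y < b'; simp only [hydef]; linarith
  case dense =>
    rw [Metric.dense_iff]
    intro x r hr
    obtain ⟨hx0, hx1⟩ := x.2
    obtain ⟨n, hn⟩ := pow_unbounded_of_one_lt (1 + 1/r) (by norm_num : (1:ℝ) < 2)
    have hrr : 0 < 1/r := by positivity
    have hnpos : 0 < n := by
      rcases Nat.eq_zero_or_pos n with rfl | h
      · simp at hn; linarith
      · exact h
    have hden : (0:ℝ) < 2^n - 1 := by linarith
    set m := ⌊x.val * (2^n - 1)⌋₊ with hm
    have h1 : (m:ℝ) ≤ x.val * (2^n - 1) := Nat.floor_le (by positivity)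
    have h2 : x.val * (2^n - 1) < (m:ℝ) + 1 := Nat.lt_floor_add_one _
    set p := (m:ℝ)/(2^n - 1) with hp
    have hpm : (m:ℝ) ≤ 2^n - 1 := by nlinarith
    have hpIcc : p ∈ Set.Icc (0:ℝ) 1 := by
      constructor
      · positivity
      · rw [hp, div_le_one hden]; exact hpm
    refine ⟨⟨p, hpIcc⟩, Metric.mem_ball.2 ?_, n, hnpos, ?_⟩
    · rw [Subtype.dist_eq, Real.dist_eq, abs_lt]
      have hle : p ≤ x.val := by
        rw [hp, div_le_iff₀ hden]; linarith
      have hgt : x.val - p < 1/(2^n - 1) := by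
        have heq : x.val - p = (x.val*(2^n-1) - m)/(2^n - 1) := by
          rw [hp]; field_simp
        rw [heq, div_lt_div_iff₀ hden hden]
        nlinarith
      have hsmall : 1/(2^n - 1) < r := by
        rw [div_lt_iff₀ hden]
        have : 1/r * r = 1 := by field_simp
        nlinarith
      constructor <;> linarith
    · apply Subtype.ext
      rw [bakerSub_val]
      exact bakerB n hnpos m hpm
  case sens =>
    refine ⟨1/4, by norm_num, ?_⟩
    intro x ε hε
    have hx : x ∈ Metric.ball x ε := Metric.mem_ball_self hε
    obtain ⟨a, b, ha, hb, hab, hsub⟩ := open_sub _ Metric.isOpen_ball x hx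
    obtain ⟨n, m, hn, hmn, hy⟩ := dyadic_in a b ha hb hab
    set p := (bakerSub^[n] x).val with hpdef
    obtain ⟨hp0, hp1⟩ := (bakerSub^[n] x).2
    rcases le_or_gt p (1/2) with hp | hp
    · obtain ⟨h1, h2⟩ := hy (7/8) (by norm_num) (by norm_num)
      have hzIcc : ((m:ℝ) + 7/8)/2^n ∈ Set.Icc (0:ℝ) 1 := ⟨by linarith, by linarith⟩
      refine ⟨⟨((m:ℝ) + 7/8)/2^n, hzIcc⟩, ?_, n, ?_⟩
      · have := hsub ⟨_, hzIcc⟩ h1 h2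
        rw [Metric.mem_ball] at this
        rw [dist_comm]; exact this
      · rw [Subtype.dist_eq, bakerSub_val, bakerSub_val,
          bakerA n m hmn (7/8) (by norm_num) (by norm_num)]
        rw [← bakerSub_val, ← hpdef, Real.dist_eq, abs_sub_comm, abs_of_nonneg (by linarith)]
        linarith
    · obtain ⟨h1, h2⟩ := hy (1/8) (by norm_num) (by norm_num)
      have hzIcc : ((m:ℝ) + 1/8)/2^n ∈ Set.Icc (0:ℝ) 1 := ⟨by linarith, by linarith⟩
      refine ⟨⟨((m:ℝ) + 1/8)/2^n, hzIcc⟩, ?_, n, ?_⟩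
      · have := hsub ⟨_, hzIcc⟩ h1 h2
        rw [Metric.mem_ball] at this
        rw [dist_comm]; exact this
      · rw [Subtype.dist_eq, bakerSub_val, bakerSub_val,
          bakerA n m hmn (1/8) (by norm_num) (by norm_num)]
        rw [← bakerSub_val, ← hpdef, Real.dist_eq, abs_of_nonneg (by linarith)]
        linarith
  case ncont =>
    intro h
    rw [Metric.continuousAt_iff] at h
    obtain ⟨δ, hδ, hd⟩ := h (1/2) (by norm_num)
    set d := min δ (1/2) with hddef
    have hd0 : 0 < d := lt_min hδ (by norm_num)
    have hdδ : d ≤ δ := min_le_left _ _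
    have hd2 : d ≤ 1/2 := min_le_right _ _
    have hx'Icc : (1/2 + d/4 : ℝ) ∈ Set.Icc (0:ℝ) 1 := ⟨by linarith, by linarith⟩
    have hclose : dist (⟨1/2 + d/4, hx'Icc⟩ : Set.Icc (0:ℝ) 1) ⟨1/2, by norm_num⟩ < δ := by
      rw [Subtype.dist_eq, Real.dist_eq]
      rw [abs_of_nonneg (by linarith)]
      linarith
    have := hd hclose
    rw [Subtype.dist_eq] at this
    have e1 : (bakerSub ⟨1/2 + d/4, hx'Icc⟩).val = d/2 := by
      show baker (1/2 + d/4) = d/2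
      rw [baker, if_neg (by push_neg; linarith)]
      ring
    have e2 : (bakerSub ⟨1/2, by norm_num⟩).val = 1 := by
      show baker (1/2) = 1
      rw [baker, if_pos le_rfl]; norm_num
    rw [e1, e2, Real.dist_eq, abs_of_nonpos (by linarith)] at this
    linarith
  case cont =>
    rintro x ⟨n, hn, hfix⟩
    have hval : baker^[n] x.val = x.val := by
      rw [← bakerSub_val, hfix]
    have hne : x.val ≠ 1/2 := by
      intro he
      obtain ⟨k, rfl⟩ : ∃ k, n = k + 1 := ⟨n - 1, by omega⟩
      rw [he, Function.iterate_succ_apply] at hval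
      have hb12 : baker (1/2) = 1 := by rw [baker, if_pos le_rfl]; norm_num
      rw [hb12, Function.iterate_fixed baker_one] at hval
      norm_num at hval
    have hb : ContinuousAt baker x.val := by
      rcases lt_or_gt_of_ne hne with h | h
      · have hev : baker =ᶠ[nhds x.val] (fun t => 2 * t) :=
          Filter.eventuallyEq_of_mem (Iio_mem_nhds h)
            (fun t ht => if_pos (le_of_lt ht))
        exact ContinuousAt.congr (by fun_prop) hev.symm
      · have hev : baker =ᶠ[nhds x.val] (fun t => 2 * t - 1) :=
          Filter.eventuallyEq_of_mem (Ioi_mem_nhds h)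
            (fun t ht => if_neg (not_le.2 ht))
        exact ContinuousAt.congr (by fun_prop) hev.symm
    exact ContinuousAt.restrict (fun t ht => baker_mem ht) hb
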